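/- Let p be a prime, A an F-finite Noetherian integral domain of characteristic p, and S ⊆ A a multiplicatively closed subset with 0 ∉ S. If A is strongly F-regular, then the localization S⁻¹A is strongly F-regular. -/

import Mathlib

/-- `A` is strongly `F`-regular with respect to the prime `p`: for every
non-zerodivisor `c` there are `e ≥ 0` and an additive map `ψ : A → A` which is
`A`-linear for the `A`-action on the source restricted along the `e`-th Frobenius
power and splits `a ↦ c * a ^ p ^ e`. -/
def IsStronglyFRegular (p : ℕ) (A : Type*) [CommRing A] : Prop :=
  ∀ c : A, (∀ x : A, c * x = 0 → x = 0) →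
    ∃ (e : ℕ) (ψ : A →+ A),
      (∀ r x : A, ψ (r ^ p ^ e * x) = r * ψ x) ∧
      ∀ a : A, ψ (c * a ^ p ^ e) = a

/-- `A` is `F`-finite: the Frobenius endomorphism `a ↦ a ^ p` is a finite ring map. -/
def IsFFinite (p : ℕ) (A : Type*) [CommRing A] [ExpChar A p] : Prop :=
  (frobenius A p).Finite

/-- Localizations (at multiplicative sets not containing 0) of a strongly F-regular
F-finite Noetherian domain of characteristic p are strongly F-regular. -/
theorem stronglyFRegular_localization (p : ℕ) [Fact p.Prime] (A : Type*) [CommRing A]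
    [IsDomain A] [CharP A p] [IsNoetherianRing A] (hFF : IsFFinite p A)
    (hSFR : IsStronglyFRegular p A)
    (S : Submonoid A) (hS : (0 : A) ∉ S)
    (B : Type*) [CommRing B] [Algebra A B] [IsLocalization S B] :
    IsStronglyFRegular p B := by
  intro c' hc'
  obtain ⟨x, t, hxt⟩ := IsLocalization.exists_mk'_eq (M := S) (S := B) c'
  by_cases hx : x = 0
  · -- trivial case : c' = 0 forces B trivial
    have h10 : (1 : B) = 0 := hc' 1 (by rw [mul_one, ← hxt, hx, IsLocalization.mk'_zero])
    haveI : Subsingleton B := subsingleton_of_zero_eq_one h10.symm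
    exact ⟨0, 0, fun r y => Subsingleton.elim _ _, fun a => Subsingleton.elim _ _⟩
  · have hSle : S ≤ nonZeroDivisors A := le_nonZeroDivisors_of_noZeroDivisors hS
    have halg : Function.Injective (algebraMap A B) := IsLocalization.injective B hSle
    have ht0 : (t : A) ≠ 0 := fun h => hS (h ▸ t.2)
    -- the element of A whose splitting we use
    have hc₀ : ∀ z : A, x * (t : A) * z = 0 → z = 0 := by
      intro z hz
      rcases mul_eq_zero.mp hz with h | h
      · exact absurd h (mul_ne_zero hx ht0)
      · exact h
    obtain ⟨e, ψ, hψ1, hψ2⟩ := hSFR (x * (t : A)) hc₀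
    set q : ℕ := p ^ e with hqdef
    obtain ⟨q', hq'⟩ : ∃ q', q = q' + 1 :=
      ⟨q - 1, (Nat.succ_pred_eq_of_pos (pow_pos (Fact.out (p := p.Prime)).pos e)).symm⟩
    have hψ1' : ∀ r y : A, ψ (r ^ q * y) = r * ψ y := hψ1
    -- equality criterion for mk'
    have heq : ∀ (a₁ a₂ : A) (s₁ s₂ : S),
        IsLocalization.mk' B a₁ s₁ = IsLocalization.mk' B a₂ s₂ ↔
          (s₂ : A) * a₁ = (s₁ : A) * a₂ := by
      intro a₁ a₂ s₁ s₂
      rw [IsLocalization.mk'_eq_iff_eq, halg.eq_iff]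
    -- the underlying function of the localized splitting
    set f : B → B := fun b =>
      IsLocalization.mk' B
        (ψ (((IsLocalization.sec S b).2 : A) ^ q' * (IsLocalization.sec S b).1))
        (IsLocalization.sec S b).2 with hfdef
    have key : ∀ (a₁ a₂ : A) (s₁ s₂ : S), (s₂ : A) * a₁ = (s₁ : A) * a₂ →
        (s₂ : A) * ψ ((s₁ : A) ^ q' * a₁) = (s₁ : A) * ψ ((s₂ : A) ^ q' * a₂) := by
      intro a₁ a₂ s₁ s₂ h
      rw [← hψ1' (s₂ : A), ← hψ1' (s₁ : A)]
      congr 1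
      have : (s₂:A) ^ q * ((s₁:A) ^ q' * a₁)
          = (s₂:A) ^ q' * (s₁:A) ^ q' * ((s₂:A) * a₁) := by rw [hq']; ring
      rw [this, h, hq']; ring
    have hf : ∀ (a : A) (s : S),
        f (IsLocalization.mk' B a s) = IsLocalization.mk' B (ψ ((s : A) ^ q' * a)) s := by
      intro a s
      have hsec := IsLocalization.mk'_sec (M := S) B (IsLocalization.mk' B a s)
      rw [hfdef]
      dsimp only
      rw [heq] at hsec ⊢
      exact key _ _ _ _ hsec
    -- additivity
    have hadd : ∀ b₁ b₂ : B, f (b₁ + b₂) = f b₁ + f b₂ := by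
      intro b₁ b₂
      obtain ⟨a₁, s₁, rfl⟩ := IsLocalization.exists_mk'_eq (M := S) (S := B) b₁
      obtain ⟨a₂, s₂, rfl⟩ := IsLocalization.exists_mk'_eq (M := S) (S := B) b₂
      rw [← IsLocalization.mk'_add, hf, hf, hf, ← IsLocalization.mk'_add]
      have h1 : ((s₁ * s₂ : S) : A) ^ q' * (a₁ * (s₂:A) + a₂ * (s₁:A))
          = (s₂:A) ^ q * ((s₁:A) ^ q' * a₁) + (s₁:A) ^ q * ((s₂:A) ^ q' * a₂) := by
        push_cast; rw [hq']; ring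
      rw [h1, map_add, hψ1', hψ1']
      congr 1
      ring
    let Ψ : B →+ B := AddMonoidHom.mk' f hadd
    -- twisted linearity of f over B
    have hlin : ∀ r y : B, f (r ^ q * y) = r * f y := by
      intro r y
      obtain ⟨c, u, rfl⟩ := IsLocalization.exists_mk'_eq (M := S) (S := B) r
      obtain ⟨a, s, rfl⟩ := IsLocalization.exists_mk'_eq (M := S) (S := B) y
      rw [← IsLocalization.mk'_pow, ← IsLocalization.mk'_mul, hf, hf, ← IsLocalization.mk'_mul]
      rw [heq]
      have h1 : ((u ^ q * s : S) : A) ^ q' * (c ^ q * a)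
          = (c * (u:A) ^ q') ^ q * ((s:A) ^ q' * a) := by
        push_cast; rw [hq']; ring
      rw [h1, hψ1']
      push_cast; rw [hq']; ring
    -- f splits x*t
    have hsplit : ∀ b : B, f (algebraMap A B (x * (t : A)) * b ^ q) = b := by
      intro b
      obtain ⟨a, s, rfl⟩ := IsLocalization.exists_mk'_eq (M := S) (S := B) b
      rw [← IsLocalization.mk'_pow, IsLocalization.mul_mk'_eq_mk'_of_mul, hf]
      have h1 : ((s ^ q : S) : A) ^ q' * (x * (t:A) * a ^ q)
          = x * (t:A) * ((s:A) ^ q' * a) ^ q := by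
        push_cast; ring
      rw [h1, hψ2, heq]
      push_cast; rw [hq']; ring
    -- assemble the final map
    set T : B := algebraMap A B (t : A) ^ 2 with hTdef
    have haddT : ∀ y z : B, f (T * (y + z)) = f (T * y) + f (T * z) := by
      intro y z; rw [mul_add, hadd]
    refine ⟨e, AddMonoidHom.mk' (fun y => f (T * y)) haddT, ?_, ?_⟩
    · intro r y
      rw [← hqdef]
      show f (T * (r ^ q * y)) = r * f (T * y)
      rw [show T * (r ^ q * y) = r ^ q * (T * y) by ring, hlin]
    · intro b
      rw [← hqdef]
      show f (T * (c' * b ^ q)) = b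
      have hc : T * c' = algebraMap A B (x * (t : A)) := by
        rw [hTdef, ← hxt, map_mul, show (algebraMap A B (t:A)) ^ 2 * IsLocalization.mk' B x t
            = (IsLocalization.mk' B x t * algebraMap A B (t:A)) * algebraMap A B (t:A) by ring,
          IsLocalization.mk'_spec, mul_comm]
      rw [← mul_assoc, hc, hsplit]
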